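/- Let Δ = (1/4)(x + x^{-1} + y + y^{-1}) be the Laplace operator on the discrete Heisenberg group H and Δ_N the analogous operator on the finite Heisenberg group H_N over Z/NZ. If N = n^2 + 1, then for all k ≤ n one has (Δ^k δ_e, δ_e) = (Δ_N^k δ_e, δ_e), where δ_e is the indicator function of the identity element and the inner products are taken in ℓ^2(H) and ℓ^2(H_N) respectively. -/

import Mathlib

@[ext]
structure Heis (R : Type*) [CommRing R] where
  a : R
  b : R
  c : R

namespace Heis
variable {R : Type*} [CommRing R]

instance : One (Heis R) := ⟨⟨0, 0, 0⟩⟩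
instance : Mul (Heis R) := ⟨fun p q => ⟨p.a + q.a, p.b + q.b, p.c + q.c + p.a * q.b⟩⟩
instance : Inv (Heis R) := ⟨fun p => ⟨-p.a, -p.b, -p.c + p.a * p.b⟩⟩

theorem mul_def (p q : Heis R) :
    p * q = ⟨p.a + q.a, p.b + q.b, p.c + q.c + p.a * q.b⟩ := rfl
theorem one_def : (1 : Heis R) = ⟨0, 0, 0⟩ := rfl
theorem inv_def (p : Heis R) : p⁻¹ = ⟨-p.a, -p.b, -p.c + p.a * p.b⟩ := rfl

instance : Group (Heis R) where
  mul_assoc p q r := by ext <;> simp [mul_def] <;> ring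
  one_mul p := by ext <;> simp [mul_def, one_def]
  mul_one p := by ext <;> simp [mul_def, one_def]
  inv_mul_cancel p := by ext <;> simp [mul_def, one_def, inv_def]

/-- generator x -/
def xgen : Heis R := ⟨1, 0, 0⟩
/-- generator y -/
def ygen : Heis R := ⟨0, 1, 0⟩

end Heis

/-- The Laplace operator Δ = (1/4)(x + x⁻¹ + y + y⁻¹) as an element of the group
algebra of the Heisenberg group over a commutative ring R. -/
noncomputable def heisLaplacian (R : Type*) [CommRing R] :
    MonoidAlgebra ℝ (Heis R) :=
  MonoidAlgebra.single Heis.xgen (1 / 4 : ℝ) + MonoidAlgebra.single Heis.xgen⁻¹ (1 / 4 : ℝ)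
    + MonoidAlgebra.single Heis.ygen (1 / 4 : ℝ) + MonoidAlgebra.single Heis.ygen⁻¹ (1 / 4 : ℝ)

open scoped Classical

/-- reduction homomorphism -/
def heisRed (N : ℕ) : Heis ℤ →* Heis (ZMod N) where
  toFun g := ⟨(g.a : ZMod N), (g.b : ZMod N), (g.c : ZMod N)⟩
  map_one' := by ext <;> simp [Heis.one_def]
  map_mul' p q := by ext <;> simp [Heis.mul_def]

lemma heisLaplacian_support_subset :
    (heisLaplacian ℤ).coeff.support ⊆
      {Heis.xgen, Heis.xgen⁻¹, Heis.ygen, Heis.ygen⁻¹} := by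
  intro g hg
  rw [Finsupp.mem_support_iff] at hg
  by_contra hng
  simp only [Finset.mem_insert, Finset.mem_singleton, not_or] at hng
  obtain ⟨h1, h2, h3, h4⟩ := hng
  apply hg
  unfold heisLaplacian
  rw [MonoidAlgebra.coeff_add, MonoidAlgebra.coeff_add, MonoidAlgebra.coeff_add,
    Finsupp.add_apply, Finsupp.add_apply, Finsupp.add_apply,
    MonoidAlgebra.coeff_single_apply, MonoidAlgebra.coeff_single_apply,
    MonoidAlgebra.coeff_single_apply, MonoidAlgebra.coeff_single_apply,
    if_neg (Ne.symm h1), if_neg (Ne.symm h2), if_neg (Ne.symm h3), if_neg (Ne.symm h4)]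
  ring

lemma heis_supp_bound (k : ℕ) : ∀ g ∈ (heisLaplacian ℤ ^ k).coeff.support,
    g.a.natAbs ≤ k ∧ g.b.natAbs ≤ k ∧ g.c.natAbs ≤ k ^ 2 := by
  induction k with
  | zero =>
    intro g hg
    rw [pow_zero, MonoidAlgebra.one_def, MonoidAlgebra.coeff_single] at hg
    have hg1 : g = 1 := by
      have := Finsupp.support_single_subset hg
      simpa using this
    subst hg1
    simp [Heis.one_def]
  | succ k ih =>
    intro g hg
    rw [pow_succ] at hg
    have hsub := MonoidAlgebra.support_coeff_mul_subset (heisLaplacian ℤ ^ k) (heisLaplacian ℤ) hg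
    rw [Finset.mem_mul] at hsub
    obtain ⟨h, hh, s, hs, rfl⟩ := hsub
    obtain ⟨ha, hb, hc⟩ := ih h hh
    have hs4 := heisLaplacian_support_subset hs
    have key : ∀ (sa sb : ℤ), sa.natAbs ≤ 1 → sb.natAbs ≤ 1 →
        (h.a + sa).natAbs ≤ k + 1 ∧ (h.b + sb).natAbs ≤ k + 1 ∧
        (h.c + 0 + h.a * sb).natAbs ≤ (k + 1) ^ 2 := by
      intro sa sb hsa hsb
      have h1 : (h.a + sa).natAbs ≤ h.a.natAbs + sa.natAbs := Int.natAbs_add_le _ _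
      have h2 : (h.b + sb).natAbs ≤ h.b.natAbs + sb.natAbs := Int.natAbs_add_le _ _
      have h3 : (h.c + 0 + h.a * sb).natAbs ≤ h.c.natAbs + (h.a * sb).natAbs := by
        rw [add_zero]; exact Int.natAbs_add_le _ _
      have h4 : (h.a * sb).natAbs = h.a.natAbs * sb.natAbs := Int.natAbs_mul _ _
      refine ⟨by omega, by omega, ?_⟩
      have h5 : h.a.natAbs * sb.natAbs ≤ k * 1 := Nat.mul_le_mul ha hsb
      have hk2 : k ^ 2 + k ≤ (k + 1) ^ 2 := by ring_nf; omega
      omega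
    simp only [Finset.mem_insert, Finset.mem_singleton] at hs4
    rcases hs4 with rfl | rfl | rfl | rfl <;>
      simp only [Heis.mul_def, Heis.xgen, Heis.ygen, Heis.inv_def] <;>
      [exact key 1 0 (by norm_num) (by norm_num);
       exact key (-1) 0 (by norm_num) (by norm_num);
       exact key 0 1 (by norm_num) (by norm_num);
       exact key 0 (-1) (by norm_num) (by norm_num)]

/-- if N = n² + 1 then for all k ≤ n the k-th return probability
(Δ^k δ_e, δ_e), i.e. the coefficient of the identity in Δ^k, is the same for the
infinite Heisenberg group H and the finite Heisenberg group H_N. -/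
theorem heisenberg_moment_matching (n k N : ℕ) (hk : k ≤ n) (hN : N = n ^ 2 + 1) :
    (heisLaplacian ℤ ^ k).coeff (1 : Heis ℤ) = (heisLaplacian (ZMod N) ^ k).coeff (1 : Heis (ZMod N)) := by
  have hNpos : 0 < N := by omega
  haveI : NeZero N := ⟨by omega⟩
  have happly : ∀ x : MonoidAlgebra ℝ (Heis ℤ),
      MonoidAlgebra.mapDomainRingHom ℝ (heisRed N) x = MonoidAlgebra.mapDomain (heisRed N) x :=
    fun _ => rfl
  have hmap : MonoidAlgebra.mapDomainRingHom ℝ (heisRed N) (heisLaplacian ℤ)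
      = heisLaplacian (ZMod N) := by
    rw [happly]
    unfold heisLaplacian
    rw [MonoidAlgebra.mapDomain_add, MonoidAlgebra.mapDomain_add, MonoidAlgebra.mapDomain_add,
      MonoidAlgebra.mapDomain_single, MonoidAlgebra.mapDomain_single,
      MonoidAlgebra.mapDomain_single, MonoidAlgebra.mapDomain_single]
    have hx : heisRed N Heis.xgen = Heis.xgen := by
      ext <;> simp [heisRed, Heis.xgen]
    have hy : heisRed N Heis.ygen = Heis.ygen := by
      ext <;> simp [heisRed, Heis.ygen]
    have hxi : heisRed N Heis.xgen⁻¹ = Heis.xgen⁻¹ := by rw [map_inv, hx]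
    have hyi : heisRed N Heis.ygen⁻¹ = Heis.ygen⁻¹ := by rw [map_inv, hy]
    rw [hx, hy, hxi, hyi]
  have hpow : MonoidAlgebra.mapDomainRingHom ℝ (heisRed N) (heisLaplacian ℤ ^ k)
      = heisLaplacian (ZMod N) ^ k := by
    rw [map_pow, hmap]
  have hfiber : ∀ g ∈ (heisLaplacian ℤ ^ k).coeff.support, heisRed N g = 1 → g = 1 := by
    intro g hg hred
    obtain ⟨ha, hb, hc⟩ := heis_supp_bound k g hg
    have h1 : (g.a : ZMod N) = 0 := congrArg Heis.a hred
    have h2 : (g.b : ZMod N) = 0 := congrArg Heis.b hred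
    have h3 : (g.c : ZMod N) = 0 := congrArg Heis.c hred
    have d1 : (N : ℤ) ∣ g.a := (ZMod.intCast_zmod_eq_zero_iff_dvd _ _).mp h1
    have d2 : (N : ℤ) ∣ g.b := (ZMod.intCast_zmod_eq_zero_iff_dvd _ _).mp h2
    have d3 : (N : ℤ) ∣ g.c := (ZMod.intCast_zmod_eq_zero_iff_dvd _ _).mp h3
    have e1 : g.a = 0 := by
      refine Int.eq_zero_of_abs_lt_dvd d1 ?_
      rw [Int.abs_eq_natAbs]
      have : g.a.natAbs < N := by nlinarith
      exact_mod_cast this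
    have e2 : g.b = 0 := by
      refine Int.eq_zero_of_abs_lt_dvd d2 ?_
      rw [Int.abs_eq_natAbs]
      have : g.b.natAbs < N := by nlinarith
      exact_mod_cast this
    have e3 : g.c = 0 := by
      refine Int.eq_zero_of_abs_lt_dvd d3 ?_
      rw [Int.abs_eq_natAbs]
      have : g.c.natAbs < N := by nlinarith
      exact_mod_cast this
    ext <;> simp [e1, e2, e3, Heis.one_def]
  rw [← hpow, happly]
  set f := heisLaplacian ℤ ^ k with hf
  have hval : (MonoidAlgebra.mapDomain (heisRed N) f).coeff (1 : Heis (ZMod N))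
      = ∑ g ∈ f.coeff.support, if heisRed N g = 1 then f.coeff g else 0 := by
    show (Finsupp.mapDomain (heisRed N) f.coeff) (1 : Heis (ZMod N)) = _
    rw [Finsupp.mapDomain]
    rw [Finsupp.sum_apply]
    rw [Finsupp.sum]
    refine Finset.sum_congr rfl fun g _ => ?_
    rw [Finsupp.single_apply]
  rw [hval]
  have hcong : ∑ g ∈ f.coeff.support, (if heisRed N g = 1 then f.coeff g else 0)
      = ∑ g ∈ f.coeff.support, (if g = 1 then f.coeff g else 0) := by
    refine Finset.sum_congr rfl fun g hg => ?_
    by_cases h : g = 1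
    · subst h; simp
    · have hne : heisRed N g ≠ 1 := fun hr => h (hfiber g hg hr)
      simp [h, hne]
  rw [hcong, Finset.sum_ite_eq' f.coeff.support (1 : Heis ℤ) f.coeff]
  by_cases h1 : (1 : Heis ℤ) ∈ f.coeff.support
  · simp [h1]
  · simp [h1, Finsupp.notMem_support_iff.mp h1]
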